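/- Let R be a commutative ring in which every 2×2 matrix of zero determinant is non-full, i.e., factors as a column vector times a row vector. If A ∈ M₂(R) is unimodular and weakly determinant liftable, then A is extendable. -/
import Mathlib

open Matrix

theorem stmt14 {R : Type*} [CommRing R]
    (hfull : ∀ N : Matrix (Fin 2) (Fin 2) R, N.det = 0 →
      ∃ l m o q : R, N = !![l * o, l * q; m * o, m * q])
    (a b c d : R)
    (hA : Ideal.span {a, b, c, d} = (⊤ : Ideal R))
    (hw : ∃ B : Matrix (Fin 2) (Fin 2) R,
      (∀ i j, B i j - (!![a, b; c, d] : Matrix (Fin 2) (Fin 2) R) i j ∈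
        Ideal.span {a * d - b * c}) ∧ B.det = 0) :
    ∃ x y z w v : R,
      a * x * w + b * x * z + c * y * w + d * y * z + (a * d - b * c) * v = 1 := by
  obtain ⟨B, hcong, hdet⟩ := hw
  obtain ⟨l, m, o, q, rfl⟩ := hfull B hdet
  -- extract congruences
  have h00 := hcong 0 0
  have h01 := hcong 0 1
  have h10 := hcong 1 0
  have h11 := hcong 1 1
  simp [Ideal.mem_span_singleton] at h00 h01 h10 h11
  obtain ⟨s, hs⟩ := h00
  obtain ⟨t, ht⟩ := h01
  obtain ⟨u, hu⟩ := h10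
  obtain ⟨r, hr⟩ := h11
  -- extract unimodularity
  have h1 : (1 : R) ∈ Ideal.span ({a, b, c, d} : Set R) := by
    rw [hA]; trivial
  rw [Ideal.mem_span_insert] at h1
  obtain ⟨α, z1, hz1, he1⟩ := h1
  rw [Ideal.mem_span_insert] at hz1
  obtain ⟨β, z2, hz2, he2⟩ := hz1
  rw [Ideal.mem_span_insert] at hz2
  obtain ⟨γ, z3, hz3, he3⟩ := hz2
  rw [Ideal.mem_span_singleton] at hz3
  obtain ⟨δ, hδ⟩ := hz3
  have hE1 : α * a + β * b + γ * c + δ * d = 1 := by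
    rw [he2, he3, hδ] at he1; linear_combination -he1
  set Δ := a * d - b * c with hΔ
  set x := α * o + β * q with hx
  set y := γ * o + δ * q with hy
  set w := α * l + γ * m with hwdef
  set z := β * l + δ * m with hz
  set k := α * s + β * t + γ * u + δ * r with hk
  have H1 : x * l + y * m = 1 + Δ * k := by
    rw [hx, hy, hk]
    linear_combination hE1 + α * hs + β * ht + γ * hu + δ * hr
  have H2 : o * w + q * z = 1 + Δ * k := by
    rw [hwdef, hz, hk]
    linear_combination hE1 + α * hs + γ * hu + β * ht + δ * hr
  refine ⟨x, y, z, w,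
    (x * w * s + x * z * t + y * w * u + y * z * r) - 2 * k - Δ * k ^ 2, ?_⟩
  linear_combination (-(x * w)) * hs + (-(x * z)) * ht + (-(y * w)) * hu +
    (-(y * z)) * hr + (o * w + q * z) * H1 + (1 + Δ * k) * H2
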